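/- Given 0 < ε < 1 and n ∈ ℕ with n ≥ 1, define ε_n = ε / ((n+1)! · max_{1≤k≤n+1} S(n+1,k)) and δ = ln((1-ε_n)/ε_n). Then for every real x with |x| > δ and every m with 1 ≤ m ≤ n, the m-th derivative of the logistic function satisfies |σ^(m)(x)| < ε. -/

import Mathlib

/-- The logistic function. -/
noncomputable def logistic (x : ℝ) : ℝ := 1 / (1 + Real.exp (-x))

/-- Stirling numbers of the second kind. -/
def stirling2 : ℕ → ℕ → ℕ
  | 0, 0 => 1
  | 0, _ + 1 => 0
  | _ + 1, 0 => 0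
  | m + 1, n + 1 => (n + 1) * stirling2 m (n + 1) + stirling2 m n

lemma stirling2_succ (m n : ℕ) :
    stirling2 (m + 1) (n + 1) = (n + 1) * stirling2 m (n + 1) + stirling2 m n := rfl

lemma stirling2_zero_right (r : ℕ) : stirling2 (r + 1) 0 = 0 := rfl

lemma stirling2_one_right (r : ℕ) : stirling2 (r + 1) 1 = 1 := by
  induction r with
  | zero => rfl
  | succ r ih => rw [stirling2_succ, ih]; rfl

lemma stirling2_eq_zero_of_lt : ∀ r k : ℕ, r < k → stirling2 r k = 0
  | 0, k + 1, _ => rfl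
  | r + 1, k + 1, h => by
    rw [stirling2_succ, stirling2_eq_zero_of_lt r (k + 1) (by omega),
      stirling2_eq_zero_of_lt r k (by omega)]
    ring

lemma stirling2_le_succ (r k : ℕ) (hk : 1 ≤ k) : stirling2 r k ≤ stirling2 (r + 1) k := by
  obtain ⟨j, rfl⟩ := Nat.exists_eq_add_of_le hk
  rw [Nat.add_comm 1 j, stirling2_succ]
  nlinarith [stirling2 r j, stirling2 r (j + 1)]

lemma stirling2_add_mono (k : ℕ) (hk : 1 ≤ k) : ∀ d r : ℕ, stirling2 r k ≤ stirling2 (r + d) k := by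
  intro d
  induction d with
  | zero => intro r; exact le_refl _
  | succ d ih => intro r; exact le_trans (ih r) (stirling2_le_succ (r + d) k hk)

lemma stirling2_mono {r r' : ℕ} (h : r ≤ r') (k : ℕ) (hk : 1 ≤ k) :
    stirling2 r k ≤ stirling2 r' k := by
  obtain ⟨d, rfl⟩ := Nat.exists_eq_add_of_le h
  exact stirling2_add_mono k hk d r

/-- Signed coefficients of the m-th derivative of the logistic function. -/
def sc (m k : ℕ) : ℤ := (-1) ^ (k + 1) * ((k - 1).factorial : ℤ) * (stirling2 (m + 1) k : ℤ)

lemma sc_zero (m : ℕ) : sc m 0 = 0 := by simp [sc, stirling2_zero_right]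

lemma sc_top (m : ℕ) : sc m (m + 2) = 0 := by
  simp [sc, stirling2_eq_zero_of_lt (m + 1) (m + 2) (by omega)]

lemma sc_rec (m j : ℕ) :
    sc (m + 1) (j + 1) = ((j : ℤ) + 1) * sc m (j + 1) - (j : ℤ) * sc m j := by
  cases j with
  | zero =>
    simp [sc, stirling2_one_right]
  | succ i =>
    have hs : (stirling2 (m + 2) (i + 2) : ℤ) =
        ((i : ℤ) + 2) * stirling2 (m + 1) (i + 2) + stirling2 (m + 1) (i + 1) := by
      rw [stirling2_succ (m + 1) (i + 1)]
      push_cast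
      ring
    simp only [sc, Nat.add_sub_cancel]
    rw [hs, Nat.factorial_succ]
    push_cast
    ring

/-- The polynomial (in `σ`) expression for the m-th derivative. -/
noncomputable def FF (m : ℕ) (s : ℝ) : ℝ :=
  ∑ k ∈ Finset.range (m + 2), (sc m k : ℝ) * s ^ k

noncomputable def DD (m : ℕ) (s : ℝ) : ℝ :=
  ∑ k ∈ Finset.range (m + 2), (sc m k : ℝ) * ((k : ℝ) * s ^ (k - 1))

lemma hasDerivAt_FF (m : ℕ) (s : ℝ) : HasDerivAt (FF m) (DD m s) s := by
  have : HasDerivAt (fun t => ∑ k ∈ Finset.range (m + 2), (sc m k : ℝ) * t ^ k)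
      (∑ k ∈ Finset.range (m + 2), (sc m k : ℝ) * ((k : ℝ) * s ^ (k - 1))) s := by
    apply HasDerivAt.fun_sum
    intro k _
    exact (hasDerivAt_pow k s).const_mul _
  exact this

lemma key_identity (m : ℕ) (s : ℝ) : (s - s ^ 2) * DD m s = FF (m + 1) s := by
  have hterm : ∀ k : ℕ, (s - s ^ 2) * ((sc m k : ℝ) * ((k : ℝ) * s ^ (k - 1)))
      = (k : ℝ) * (sc m k : ℝ) * s ^ k - (k : ℝ) * (sc m k : ℝ) * s ^ (k + 1) := by
    intro k
    cases k with
    | zero => simp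
    | succ j =>
      simp only [Nat.add_sub_cancel]
      push_cast
      ring
  have hA : (s - s ^ 2) * DD m s =
      (∑ k ∈ Finset.range (m + 2), (k : ℝ) * (sc m k : ℝ) * s ^ k)
      - ∑ k ∈ Finset.range (m + 2), (k : ℝ) * (sc m k : ℝ) * s ^ (k + 1) := by
    rw [DD, Finset.mul_sum, ← Finset.sum_sub_distrib]
    exact Finset.sum_congr rfl fun k _ => hterm k
  rw [hA, FF]
  rw [Finset.sum_range_succ' (fun k => (sc (m + 1) k : ℝ) * s ^ k) (m + 2)]
  rw [sc_zero]
  have hrec : ∀ j : ℕ, (sc (m + 1) (j + 1) : ℝ) * s ^ (j + 1) =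
      ((j : ℝ) + 1) * (sc m (j + 1) : ℝ) * s ^ (j + 1) - (j : ℝ) * (sc m j : ℝ) * s ^ (j + 1) := by
    intro j
    rw [sc_rec m j]
    push_cast
    ring
  rw [Finset.sum_congr rfl fun j _ => hrec j, Finset.sum_sub_distrib]
  have hB : ∑ j ∈ Finset.range (m + 2), (j : ℝ) * (sc m j : ℝ) * s ^ (j + 1)
      = ∑ k ∈ Finset.range (m + 2), (k : ℝ) * (sc m k : ℝ) * s ^ (k + 1) := rfl
  have hA2 : ∑ j ∈ Finset.range (m + 2), ((j : ℝ) + 1) * (sc m (j + 1) : ℝ) * s ^ (j + 1)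
      = ∑ k ∈ Finset.range (m + 2), (k : ℝ) * (sc m k : ℝ) * s ^ k := by
    rw [Finset.sum_range_succ]
    rw [sc_top]
    rw [Finset.sum_range_succ' (fun k => (k : ℝ) * (sc m k : ℝ) * s ^ k) (m + 1)]
    push_cast
    ring
  rw [hB, hA2]
  ring

lemma logistic_hasDerivAt (x : ℝ) :
    HasDerivAt logistic (logistic x - logistic x ^ 2) x := by
  have hpos : (0:ℝ) < 1 + Real.exp (-x) := by positivity
  have h1 : HasDerivAt (fun y : ℝ => 1 + Real.exp (-y)) (-Real.exp (-x)) x := by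
    have := (Real.hasDerivAt_exp (-x)).comp x (hasDerivAt_neg x)
    simpa using this.const_add 1
  have h2 := h1.inv (ne_of_gt hpos)
  have heq : -(-Real.exp (-x)) / (1 + Real.exp (-x)) ^ 2 = logistic x - logistic x ^ 2 := by
    rw [logistic]
    field_simp
    ring
  have h3 : (fun y : ℝ => (1 + Real.exp (-y))⁻¹) = logistic := by
    funext y; rw [logistic, one_div]
  have h4 : HasDerivAt logistic (- -Real.exp (-x) / (1 + Real.exp (-x)) ^ 2) x := h3 ▸ h2
  rw [heq] at h4
  exact h4

lemma iter_formula (m : ℕ) (x : ℝ) :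
    iteratedDeriv m logistic x = FF m (logistic x) := by
  induction m generalizing x with
  | zero =>
    simp [FF, Finset.sum_range_succ, sc, stirling2]
  | succ m ih =>
    rw [iteratedDeriv_succ]
    have hfun : iteratedDeriv m logistic = fun y => FF m (logistic y) := funext ih
    rw [hfun]
    have hd : HasDerivAt (fun y => FF m (logistic y))
        (DD m (logistic x) * (logistic x - logistic x ^ 2)) x :=
      (hasDerivAt_FF m (logistic x)).comp x (logistic_hasDerivAt x)
    rw [hd.deriv, mul_comm, key_identity]

lemma FF_symm (m : ℕ) (s : ℝ) : FF (m + 1) (1 - s) = (-1 : ℝ) ^ m * FF (m + 1) s := by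
  induction m generalizing s with
  | zero =>
    simp only [pow_zero, one_mul]
    have h : ∀ t : ℝ, FF 1 t = t - t ^ 2 := by
      intro t
      simp [FF, Finset.sum_range_succ, sc, stirling2, Nat.factorial]
      ring
    rw [h, h]; ring
  | succ m ih =>
    have hD : -DD (m + 1) (1 - s) = (-1 : ℝ) ^ m * DD (m + 1) s := by
      have h1 : HasDerivAt (fun t => FF (m + 1) (1 - t)) (-DD (m + 1) (1 - s)) s := by
        have := (hasDerivAt_FF (m + 1) (1 - s)).comp s
          ((hasDerivAt_id s).const_sub 1)
        simpa [mul_comm, Function.comp_def] using this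
      have h2 : HasDerivAt (fun t => (-1 : ℝ) ^ m * FF (m + 1) t)
          ((-1 : ℝ) ^ m * DD (m + 1) s) s :=
        (hasDerivAt_FF (m + 1) s).const_mul _
      have hfun : (fun t => FF (m + 1) (1 - t)) = fun t => (-1 : ℝ) ^ m * FF (m + 1) t :=
        funext ih
      rw [hfun] at h1
      exact h1.unique h2
    rw [← key_identity (m + 1) (1 - s), ← key_identity (m + 1) s]
    have hsq : (1 - s) - (1 - s) ^ 2 = s - s ^ 2 := by ring
    rw [hsq]
    have : DD (m + 1) (1 - s) = -((-1 : ℝ) ^ m * DD (m + 1) s) := by linarith [hD]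
    rw [this]
    ring

lemma logistic_pos (x : ℝ) : 0 < logistic x := by
  rw [logistic]; positivity

lemma logistic_strictMono : StrictMono logistic := by
  intro a b hab
  rw [logistic, logistic]
  have h1 : (0:ℝ) < 1 + Real.exp (-b) := by positivity
  apply div_lt_div_of_pos_left one_pos h1
  have := Real.exp_lt_exp.mpr (neg_lt_neg hab)
  linarith

lemma logistic_neg (x : ℝ) : logistic (-x) = 1 - logistic x := by
  rw [logistic, logistic, neg_neg]
  have h1 : (0:ℝ) < 1 + Real.exp (-x) := by positivity
  have h2 : (0:ℝ) < 1 + Real.exp x := by positivity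
  have h3 : Real.exp x * Real.exp (-x) = 1 := by
    rw [← Real.exp_add]; simp
  field_simp
  nlinarith [h3]

theorem stmt_11 (ε : ℝ) (hε0 : 0 < ε) (hε1 : ε < 1) (n : ℕ) (hn : 1 ≤ n)
    (εn δ : ℝ)
    (hεn : εn = ε / (((n + 1).factorial : ℝ) *
      (((Finset.Icc 1 (n + 1)).sup (stirling2 (n + 1)) : ℕ) : ℝ)))
    (hεn2 : εn < 1 / 2)
    (hδ : δ = Real.log ((1 - εn) / εn)) :
    ∀ x : ℝ, |x| > δ → ∀ m : ℕ, 1 ≤ m → m ≤ n → |iteratedDeriv m logistic x| < ε := by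
  set Smax : ℕ := (Finset.Icc 1 (n + 1)).sup (stirling2 (n + 1)) with hS
  have hS1 : 1 ≤ Smax := by
    have h1 : (1 : ℕ) ∈ Finset.Icc 1 (n + 1) := by simp
    have := Finset.le_sup (f := stirling2 (n + 1)) h1
    rwa [stirling2_one_right] at this
  have hden : (0:ℝ) < ((n + 1).factorial : ℝ) * (Smax : ℝ) := by
    have := (n + 1).factorial_pos
    positivity
  have hεnpos : 0 < εn := by rw [hεn]; positivity
  have hεε : ε = εn * (((n + 1).factorial : ℝ) * (Smax : ℝ)) := by
    rw [hεn]; field_simp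
  -- the crucial bound for 0 ≤ s < εn
  have hbound : ∀ m : ℕ, 1 ≤ m → m ≤ n → ∀ s : ℝ, 0 ≤ s → s < εn → |FF m s| < ε := by
    intro m hm1 hmn s hs0 hsεn
    have hs1 : s ≤ 1 := by linarith
    have habs : |FF m s| ≤ ∑ k ∈ Finset.range (m + 2), |(sc m k : ℝ) * s ^ k| :=
      Finset.abs_sum_le_sum_abs _ _
    have hsum : (∑ k ∈ Finset.range (m + 2), |(sc m k : ℝ) * s ^ k|)
        ≤ ((m + 1) : ℝ) * ((m.factorial : ℝ) * (Smax : ℝ) * s) := by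
      rw [Finset.sum_range_succ' (fun k => |(sc m k : ℝ) * s ^ k|) (m + 1)]
      have h0 : |(sc m 0 : ℝ) * s ^ 0| = 0 := by rw [sc_zero]; simp
      rw [h0, add_zero]
      have hterm : ∀ j ∈ Finset.range (m + 1),
          |(sc m (j + 1) : ℝ) * s ^ (j + 1)| ≤ (m.factorial : ℝ) * (Smax : ℝ) * s := by
        intro j hj
        rw [Finset.mem_range] at hj
        rw [abs_mul, abs_pow, abs_of_nonneg hs0]
        have hc : |(sc m (j + 1) : ℝ)| = (j.factorial : ℝ) * (stirling2 (m + 1) (j + 1) : ℝ) := by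
          rw [sc]
          push_cast
          rw [abs_mul, abs_mul, abs_pow, abs_neg, abs_one, one_pow, one_mul,
            Nat.abs_cast, Nat.abs_cast]
        rw [hc]
        have hf : (j.factorial : ℝ) ≤ (m.factorial : ℝ) := by
          exact_mod_cast Nat.factorial_le (by omega)
        have hst : (stirling2 (m + 1) (j + 1) : ℝ) ≤ (Smax : ℝ) := by
          have h1 : stirling2 (m + 1) (j + 1) ≤ stirling2 (n + 1) (j + 1) :=
            stirling2_mono (by omega) (j + 1) (by omega)
          have h2 : stirling2 (n + 1) (j + 1) ≤ Smax := by
            apply Finset.le_sup (f := stirling2 (n + 1))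
            simp only [Finset.mem_Icc]
            omega
          exact_mod_cast le_trans h1 h2
        have hp : s ^ (j + 1) ≤ s := by
          simpa using pow_le_pow_of_le_one hs0 hs1 (by omega : 1 ≤ j + 1)
        have hq : (j.factorial : ℝ) * (stirling2 (m + 1) (j + 1) : ℝ)
            ≤ (m.factorial : ℝ) * (Smax : ℝ) :=
          mul_le_mul hf hst (by positivity) (by positivity)
        exact mul_le_mul hq hp (by positivity) (by positivity)
      refine le_trans (Finset.sum_le_sum hterm) ?_
      rw [Finset.sum_const, Finset.card_range, nsmul_eq_mul]
      apply le_of_eq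
      push_cast
      ring
    have hfact : ((m + 1) : ℝ) * (m.factorial : ℝ) ≤ ((n + 1).factorial : ℝ) := by
      have : (m + 1).factorial ≤ (n + 1).factorial := Nat.factorial_le (by omega)
      rw [Nat.factorial_succ] at this
      exact_mod_cast this
    have hfin : ((m + 1) : ℝ) * ((m.factorial : ℝ) * (Smax : ℝ) * s)
        < εn * (((n + 1).factorial : ℝ) * (Smax : ℝ)) := by
      have h1 : ((m + 1) : ℝ) * ((m.factorial : ℝ) * (Smax : ℝ) * s)
          ≤ ((n + 1).factorial : ℝ) * (Smax : ℝ) * s := by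
        have := mul_le_mul_of_nonneg_right hfact (by positivity : (0:ℝ) ≤ (Smax : ℝ) * s)
        nlinarith [this]
      have h2 : ((n + 1).factorial : ℝ) * (Smax : ℝ) * s
          < ((n + 1).factorial : ℝ) * (Smax : ℝ) * εn := by
        exact mul_lt_mul_of_pos_left hsεn hden
      linarith
    rw [hεε]
    exact lt_of_le_of_lt (le_trans habs hsum) hfin
  -- logistic(-δ) = εn
  have hlog : logistic (-δ) = εn := by
    rw [logistic, neg_neg, hδ, Real.exp_log (div_pos (by linarith) hεnpos)]
    field_simp
    ring
  intro x hx m hm1 hmn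
  obtain ⟨m', rfl⟩ : ∃ m', m = m' + 1 := ⟨m - 1, by omega⟩
  rcases lt_abs.mp hx with hxr | hxl
  · -- δ < x, use symmetry
    have hxneg : -x < -δ := by linarith
    have hs0 : 0 < logistic (-x) := logistic_pos _
    have hsε : logistic (-x) < εn := by
      rw [← hlog]
      exact logistic_strictMono hxneg
    have hlx : logistic x = 1 - logistic (-x) := by
      have := logistic_neg (-x)
      rw [neg_neg] at this
      linarith
    rw [iter_formula, hlx, FF_symm, abs_mul, abs_pow, abs_neg, abs_one, one_pow, one_mul]
    exact hbound (m' + 1) (by omega) hmn _ (le_of_lt hs0) hsε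
  · -- x < -δ
    have hxneg : x < -δ := by linarith
    have hs0 : 0 < logistic x := logistic_pos _
    have hsε : logistic x < εn := by
      rw [← hlog]
      exact logistic_strictMono hxneg
    rw [iter_formula]
    exact hbound (m' + 1) (by omega) hmn _ (le_of_lt hs0) hsε
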